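/- For any prime power q, integers 1 ≤ k < n, and matrices A, B ∈ F_q^{k×(n−k)}, the subspace distance between the row spaces of the k×n matrices (I_k | A) and (I_k | B) equals 2·rank(A − B), where I_k is the k×k identity matrix. -/
import Mathlib


open Module Matrix

/-- The row space of a matrix: the subspace spanned by its rows. -/
noncomputable def rowSpace {F : Type*} [Field F] {k n : ℕ} (M : Matrix (Fin k) (Fin n) F) :
    Submodule F (Fin n → F) := LinearMap.range M.vecMulLinear

/-- The subspace distance `d_S(U, W) = dim(U + W) − dim(U ∩ W)`. -/
noncomputable def subspaceDist {F : Type*} [Field F] {n : ℕ}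
    (U W : Submodule F (Fin n → F)) : ℕ :=
  finrank F ↥(U ⊔ W) - finrank F ↥(U ⊓ W)

/-- Horizontal concatenation `(A | B)` of two matrices with the same number of rows. -/
def hcat {F : Type*} {k n1 n2 : ℕ} (A : Matrix (Fin k) (Fin n1) F)
    (B : Matrix (Fin k) (Fin n2) F) : Matrix (Fin k) (Fin (n1 + n2)) F :=
  Matrix.of fun i => Fin.append (A i) (B i)

section Aux

variable {F : Type*} [Field F] {k m n : ℕ} (h : n = k + m)

lemma vecMul_hcat_one (C : Matrix (Fin k) (Fin m) F) (x : Fin k → F) :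
    x ᵥ* ((hcat (1 : Matrix (Fin k) (Fin k) F) C).submatrix id (Fin.cast h)) =
      fun j => Fin.append x (x ᵥ* C) (Fin.cast h j) := by
  funext j
  have : ∀ j' : Fin (k + m),
      (x ᵥ* (hcat (1 : Matrix (Fin k) (Fin k) F) C)) j' = Fin.append x (x ᵥ* C) j' := by
    intro j'
    refine Fin.addCases (fun l => ?_) (fun r => ?_) j'
    · simp [Matrix.vecMul, dotProduct, hcat, Fin.append_left, Matrix.one_apply,
        mul_ite, Finset.sum_ite_eq']
    · simp [Matrix.vecMul, dotProduct, hcat, Fin.append_right]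
  have hsub : (x ᵥ* ((hcat (1 : Matrix (Fin k) (Fin k) F) C).submatrix id (Fin.cast h))) j =
      (x ᵥ* (hcat (1 : Matrix (Fin k) (Fin k) F) C)) (Fin.cast h j) := by
    simp [Matrix.vecMul, dotProduct, Matrix.submatrix]
  rw [hsub, this]

lemma vecMul_hcat_inj (C : Matrix (Fin k) (Fin m) F) :
    Function.Injective
      (((hcat (1 : Matrix (Fin k) (Fin k) F) C).submatrix id (Fin.cast h)).vecMulLinear) := by
  intro x y hxy
  simp only [Matrix.vecMulLinear_apply, vecMul_hcat_one h] at hxy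
  funext j
  have := congrFun hxy (Fin.cast h.symm (Fin.castAdd m j))
  simpa [Fin.append_left] using this

lemma vecMul_hcat_eq_iff (C D : Matrix (Fin k) (Fin m) F) (x : Fin k → F) :
    (((hcat (1 : Matrix (Fin k) (Fin k) F) C).submatrix id (Fin.cast h)).vecMulLinear x =
      ((hcat (1 : Matrix (Fin k) (Fin k) F) D).submatrix id (Fin.cast h)).vecMulLinear x) ↔
    x ᵥ* C = x ᵥ* D := by
  simp only [Matrix.vecMulLinear_apply, vecMul_hcat_one h]
  constructor
  · intro hxy
    funext r
    have := congrFun hxy (Fin.cast h.symm (Fin.natAdd k r))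
    simpa [Fin.append_right] using this
  · intro hcd
    rw [hcd]

end Aux

/-- For a prime power `q`, integers `1 ≤ k < n` and matrices `A, B ∈ F_q^{k×(n−k)}`, the
subspace distance between the row spaces of `(I_k | A)` and `(I_k | B)` equals
`2·rank(A − B)`. -/
theorem subspaceDist_lifted_eq_two_mul_rank (q k n : ℕ) (hq : IsPrimePow q)
    (hk : 1 ≤ k) (hkn : k < n)
    (F : Type*) [Field F] [Fintype F] (hcard : Fintype.card F = q)
    (A B : Matrix (Fin k) (Fin (n - k)) F) :
    subspaceDist
      (rowSpace ((hcat (1 : Matrix (Fin k) (Fin k) F) A).submatrix id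
        (Fin.cast (by omega : n = k + (n - k)))))
      (rowSpace ((hcat (1 : Matrix (Fin k) (Fin k) F) B).submatrix id
        (Fin.cast (by omega : n = k + (n - k))))) = 2 * (A - B).rank := by
  have h : n = k + (n - k) := by omega
  set MA := (hcat (1 : Matrix (Fin k) (Fin k) F) A).submatrix id (Fin.cast h) with hMA
  set MB := (hcat (1 : Matrix (Fin k) (Fin k) F) B).submatrix id (Fin.cast h) with hMB
  set U := rowSpace MA with hU
  set W := rowSpace MB with hW
  -- dimensions of U and W
  have hdimU : finrank F ↥U = k := by
    rw [hU, rowSpace, LinearMap.finrank_range_of_inj (vecMul_hcat_inj h A)]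
    simp
  have hdimW : finrank F ↥W = k := by
    rw [hW, rowSpace, LinearMap.finrank_range_of_inj (vecMul_hcat_inj h B)]
    simp
  -- the intersection is isomorphic to the kernel of vecMul by (A - B)
  set K := LinearMap.ker (A - B).vecMulLinear with hK
  have hmem : ∀ x : Fin k → F, x ∈ K ↔ x ᵥ* A = x ᵥ* B := by
    intro x
    rw [hK, LinearMap.mem_ker, Matrix.vecMulLinear_apply, Matrix.vecMul_sub, sub_eq_zero]
  have hker : finrank F ↥K = finrank F ↥(U ⊓ W) := by
    have hφmem : ∀ x : ↥K, MA.vecMulLinear ((K.subtype) x) ∈ U ⊓ W := by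
      rintro ⟨x, hx⟩
      refine Submodule.mem_inf.2 ⟨⟨x, rfl⟩, ?_⟩
      rw [hW, rowSpace]
      exact ⟨x, ((vecMul_hcat_eq_iff h B A x).2 ((hmem x).1 hx).symm)⟩
    let φ : ↥K →ₗ[F] ↥(U ⊓ W) :=
      LinearMap.codRestrict (U ⊓ W) (MA.vecMulLinear ∘ₗ K.subtype) hφmem
    have hinj : Function.Injective φ := by
      intro a b hab
      have : MA.vecMulLinear (K.subtype a) = MA.vecMulLinear (K.subtype b) := by
        have := congrArg (Submodule.subtype (U ⊓ W)) hab
        simpa [φ] using this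
      exact Subtype.ext (vecMul_hcat_inj h A this)
    have hsurj : Function.Surjective φ := by
      rintro ⟨v, hv⟩
      obtain ⟨hvU, hvW⟩ := Submodule.mem_inf.1 hv
      obtain ⟨x, hx⟩ := hvU
      obtain ⟨y, hy⟩ := hvW
      -- show x = y
      have hvA : v = fun j => Fin.append x (x ᵥ* A) (Fin.cast h j) := by
        rw [← hx, hMA, Matrix.vecMulLinear_apply, vecMul_hcat_one h A x]
      have hvB : v = fun j => Fin.append y (y ᵥ* B) (Fin.cast h j) := by
        rw [← hy, hMB, Matrix.vecMulLinear_apply, vecMul_hcat_one h B y]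
      have hxy : x = y := by
        funext j
        have h1 := congrFun hvA (Fin.cast h.symm (Fin.castAdd (n - k) j))
        have h2 := congrFun hvB (Fin.cast h.symm (Fin.castAdd (n - k) j))
        rw [show Fin.cast h (Fin.cast h.symm (Fin.castAdd (n-k) j)) = Fin.castAdd (n-k) j from
          rfl, Fin.append_left] at h1 h2
        rw [← h1, ← h2]
      have hxK : x ∈ K := by
        rw [hmem]
        have hy' : MB.vecMulLinear x = v := by rw [hxy]; exact hy
        exact (vecMul_hcat_eq_iff h A B x).1 (hx.trans hy'.symm)
      exact ⟨⟨x, hxK⟩, Subtype.ext hx⟩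
    exact LinearEquiv.finrank_eq (LinearEquiv.ofBijective φ ⟨hinj, hsurj⟩)
  -- rank-nullity for (A - B)
  have hrank : (A - B).rank = finrank F ↥(LinearMap.range (A - B).vecMulLinear) := by
    have : (A - B).vecMulLinear = (A - B)ᵀ.mulVecLin := by
      ext x
      simp [Matrix.mulVec_transpose]
    rw [this, ← Matrix.rank_transpose (A - B)]
    rfl
  have hrn : (A - B).rank + finrank F ↥K = k := by
    rw [hrank, hK]
    have := LinearMap.finrank_range_add_finrank_ker (A - B).vecMulLinear
    simpa using this
  -- dimension formula for sup and inf
  have hsupinf : finrank F ↥(U ⊔ W) + finrank F ↥(U ⊓ W) = finrank F ↥U + finrank F ↥W :=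
    Submodule.finrank_sup_add_finrank_inf_eq U W
  rw [hdimU, hdimW] at hsupinf
  rw [subspaceDist]
  omega
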